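/- Large deviations estimate for the stopping time τ: for every ε > 0, limsup_{n→∞} n^{−1} log μ_n( |n^{−1} τ(ℓ) − 1/2| ≥ ε ) < 0; equivalently, there exist c > 0 and N such that μ_n(|n^{−1}τ(ℓ) − 1/2| ≥ ε) ≤ e^{−cn} for all n ≥ N. The same estimate holds for τ̃ in place of τ. -/

import Mathlib

open MeasureTheory Filter Finset

noncomputable section

/-- The i.i.d. product measure `μ^{⊗ n}` on `Fin n → ℝ`. -/
def pmeas (μ : MeasureTheory.Measure ℝ) (n : ℕ) : MeasureTheory.Measure (Fin n → ℝ) :=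
  MeasureTheory.Measure.pi fun _ => μ

/-- The minimal index (as a natural number) at which `ℓ` attains its maximum. -/
def maxIdx (n : ℕ) (ℓ : Fin n → ℝ) : ℕ :=
  sInf {i : ℕ | ∃ h : i < n, ∀ j : Fin n, ℓ j ≤ ℓ ⟨i, h⟩}

/-- The `i`-th coordinate of `ℓ` (`0`-based), with junk value `0` out of range. -/
def coord (n : ℕ) (ℓ : Fin n → ℝ) (i : ℕ) : ℝ :=
  if h : i < n then ℓ ⟨i, h⟩ else 0

/-- `a_p(ℓ)`: the number of short subsets of cardinality `p+1` containing the minimal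
index `i₀` of a maximal coordinate. -/
def aCount (n p : ℕ) (ℓ : Fin n → ℝ) : ℕ :=
  Nat.card {J : Finset (Fin n) //
    J.card = p + 1 ∧ (∃ i ∈ J, (i : ℕ) = maxIdx n ℓ) ∧
    ∑ j ∈ J, ℓ j < ∑ j ∈ Jᶜ, ℓ j}

/-- `ã_p(ℓ)`: the number of median subsets of cardinality `p+1` containing `i₀`. -/
def medCount (n p : ℕ) (ℓ : Fin n → ℝ) : ℕ :=
  Nat.card {J : Finset (Fin n) //
    J.card = p + 1 ∧ (∃ i ∈ J, (i : ℕ) = maxIdx n ℓ) ∧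
    ∑ j ∈ J, ℓ j = ∑ j ∈ Jᶜ, ℓ j}

/-- The `p`-th Betti number of the planar polygon space:
`b_p(ℓ) = a_p(ℓ) + ã_p(ℓ) + a_{n-3-p}(ℓ)`. -/
def bPlanar (n p : ℕ) (ℓ : Fin n → ℝ) : ℕ :=
  aCount n p ℓ + medCount n p ℓ + aCount n (n - 3 - p) ℓ

/-- `â_p(ℓ)`: the number of short subsets of cardinality `p+1` containing the last index. -/
def hatACount (n p : ℕ) (ℓ : Fin n → ℝ) : ℕ :=
  Nat.card {J : Finset (Fin n) //
    J.card = p + 1 ∧ (∃ i ∈ J, (i : ℕ) = n - 1) ∧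
    ∑ j ∈ J, ℓ j < ∑ j ∈ Jᶜ, ℓ j}

/-- The `2p`-th Betti number of the spatial polygon space:
`b_{2p}(ℓ) = ∑_{j=0}^p (â_j(ℓ) - â_{n-j-2}(ℓ))`. -/
def bSpatial (n p : ℕ) (ℓ : Fin n → ℝ) : ℝ :=
  ∑ j ∈ Finset.range (p + 1), ((hatACount n j ℓ : ℝ) - (hatACount n (n - j - 2) ℓ : ℝ))

/-- The Poincaré polynomial of the planar polygon space `M_ℓ`. -/
def poincareM (n : ℕ) (t : ℝ) (ℓ : Fin n → ℝ) : ℝ :=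
  ∑ p ∈ Finset.range (n - 2), (bPlanar n p ℓ : ℝ) * t ^ p

/-- The Poincaré polynomial of the spatial polygon space `N_ℓ`. -/
def poincareN (n : ℕ) (t : ℝ) (ℓ : Fin n → ℝ) : ℝ :=
  ∑ p ∈ Finset.range (n - 2), bSpatial n p ℓ * t ^ (2 * p)

/-- The stopping time `τ_σ(ℓ)`, for `σ` a permutation of `{1, …, n-1}`. -/
def tauPerm (n : ℕ) (σ : Equiv.Perm (Fin (n - 1))) (ℓ : Fin n → ℝ) : ℕ :=
  sInf {t : ℕ |
    0 ≤ coord n ℓ (n - 1) + ∑ i : Fin (n - 1),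
      (if (i : ℕ) < t then coord n ℓ ((σ i : ℕ)) else - coord n ℓ ((σ i : ℕ)))}

/-- `ℓ̃`: the vector obtained from `ℓ` by exchanging the coordinates at positions `i₀`
(the minimal index of a maximal coordinate) and `n`. -/
def tildeVec (n : ℕ) (ℓ : Fin n → ℝ) : Fin n → ℝ := fun j =>
  if (j : ℕ) = maxIdx n ℓ then coord n ℓ (n - 1)
  else if (j : ℕ) = n - 1 then coord n ℓ (maxIdx n ℓ)
  else ℓ j

/-- `τ(ℓ) = τ_id(ℓ)`. -/
def tau (n : ℕ) (ℓ : Fin n → ℝ) : ℕ := tauPerm n (Equiv.refl _) ℓ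

/-- `τ̃(ℓ) = τ_id(ℓ̃)`. -/
def tauTilde (n : ℕ) (ℓ : Fin n → ℝ) : ℕ := tau n (tildeVec n ℓ)

open scoped ENNReal Topology

/-- lintegral of a product of coordinate functions over a pi measure. -/
lemma lintegral_pi_prod (μ : Measure ℝ) [SigmaFinite μ] :
    ∀ (n : ℕ) (f : Fin n → ℝ → ℝ≥0∞), (∀ i, Measurable (f i)) →
      ∫⁻ x, ∏ i, f i (x i) ∂(Measure.pi fun _ : Fin n => μ) = ∏ i, ∫⁻ y, f i y ∂μ := by
  intro n
  induction n with
  | zero =>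
      intro f hf
      simp [lintegral_const, Measure.pi_univ]
  | succ n ih =>
      intro f hf
      have h := (measurePreserving_piFinSuccAbove (fun _ : Fin (n+1) => μ) 0).symm
      rw [← h.map_eq, MeasureTheory.lintegral_map_equiv]
      simp only [MeasurableEquiv.piFinSuccAbove_symm_apply, Fin.insertNthEquiv,
        Fin.prod_univ_succ, Fin.insertNth_zero, Equiv.coe_fn_mk, Fin.zero_succAbove,
        Fin.cons_zero, Fin.cons_succ, cast_eq]
      rw [lintegral_prod_mul (f := fun y => f 0 y)
        (g := fun (x : Fin n → ℝ) => ∏ i : Fin n, f i.succ (x i)) (hf 0).aemeasurable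
        (Finset.measurable_prod _ fun i _ => (hf i.succ).comp (measurable_pi_apply i)).aemeasurable]
      rw [ih (fun i => f i.succ) (fun i => hf i.succ)]

/-- The real moment generating function. -/
def mgfR (μ : Measure ℝ) (t : ℝ) : ℝ := ∫ x, Real.exp (t * x) ∂μ

lemma mgfR_nonneg (μ : Measure ℝ) (t : ℝ) : 0 ≤ mgfR μ t :=
  integral_nonneg fun x => (Real.exp_pos _).le

lemma mgfR_zero (μ : Measure ℝ) [IsProbabilityMeasure μ] : mgfR μ 0 = 1 := by
  simp [mgfR]

lemma lint_exp (μ : Measure ℝ) (t : ℝ)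
    (ht : Integrable (fun x => Real.exp (t * x)) μ) :
    ∫⁻ x, ENNReal.ofReal (Real.exp (t * x)) ∂μ = ENNReal.ofReal (mgfR μ t) :=
  (MeasureTheory.ofReal_integral_eq_lintegral_ofReal ht
    (Filter.Eventually.of_forall fun x => (Real.exp_pos _).le)).symm

/-- Chernoff-type bound for the probability that one i.i.d. block-sum exceeds another. -/
lemma chernoff_bound (μ : Measure ℝ) [IsProbabilityMeasure μ] {s : ℝ} (hs0 : 0 ≤ s)
    (hs : Integrable (fun x => Real.exp (s * x)) μ)
    (hs' : Integrable (fun x => Real.exp (-s * x)) μ)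
    (n : ℕ) (A B : Finset (Fin n)) (hd : Disjoint A B) :
    pmeas μ n {ℓ | ∑ j ∈ A, ℓ j ≤ ∑ j ∈ B, ℓ j} ≤
      ENNReal.ofReal ((mgfR μ s) ^ B.card * (mgfR μ (-s)) ^ A.card) := by
  classical
  set c : Fin n → ℝ := fun j => if j ∈ B then s else if j ∈ A then -s else 0 with hc
  have hcA : ∀ j ∈ A, c j = -s := by
    intro j hj
    have : j ∉ B := Finset.disjoint_left.mp hd hj
    simp [hc, hj, this]
  have hcB : ∀ j ∈ B, c j = s := by intro j hj; simp [hc, hj]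
  have hcO : ∀ j ∈ (A ∪ B)ᶜ, c j = 0 := by
    intro j hj
    rw [Finset.mem_compl, Finset.mem_union] at hj
    push_neg at hj
    simp [hc, hj.1, hj.2]
  set g : (Fin n → ℝ) → ℝ≥0∞ := fun ℓ => ∏ j, ENNReal.ofReal (Real.exp (c j * ℓ j)) with hg
  have hgmeas : Measurable g := by
    apply Finset.measurable_prod
    intro j _
    exact ENNReal.measurable_ofReal.comp
      (Real.measurable_exp.comp (by fun_prop))
  have hsub : {ℓ : Fin n → ℝ | ∑ j ∈ A, ℓ j ≤ ∑ j ∈ B, ℓ j} ⊆ {ℓ | 1 ≤ g ℓ} := by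
    intro ℓ hℓ
    have hsum : ∑ j, c j * ℓ j = s * ∑ j ∈ B, ℓ j - s * ∑ j ∈ A, ℓ j := by
      have e1 : ∑ j ∈ A, c j * ℓ j = -s * ∑ j ∈ A, ℓ j := by
        rw [Finset.mul_sum]
        exact Finset.sum_congr rfl fun j hj => by rw [hcA j hj]
      have e2 : ∑ j ∈ B, c j * ℓ j = s * ∑ j ∈ B, ℓ j := by
        rw [Finset.mul_sum]
        exact Finset.sum_congr rfl fun j hj => by rw [hcB j hj]
      have e3 : ∑ j ∈ (A ∪ B)ᶜ, c j * ℓ j = 0 :=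
        Finset.sum_eq_zero fun j hj => by rw [hcO j hj, zero_mul]
      rw [← Finset.sum_add_sum_compl (A ∪ B) (fun j => c j * ℓ j),
        Finset.sum_union hd, e1, e2, e3]
      ring
    have h0 : (0:ℝ) ≤ ∑ j, c j * ℓ j := by
      rw [hsum]
      have := hℓ
      simp only [Set.mem_setOf_eq] at this
      nlinarith
    have : g ℓ = ENNReal.ofReal (Real.exp (∑ j, c j * ℓ j)) := by
      rw [Real.exp_sum, ENNReal.ofReal_prod_of_nonneg fun j _ => (Real.exp_pos _).le]
    rw [Set.mem_setOf_eq, this]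
    rw [← ENNReal.ofReal_one]
    exact ENNReal.ofReal_le_ofReal (Real.one_le_exp h0)
  calc pmeas μ n {ℓ | ∑ j ∈ A, ℓ j ≤ ∑ j ∈ B, ℓ j}
      ≤ pmeas μ n {ℓ | 1 ≤ g ℓ} := measure_mono hsub
    _ ≤ ∫⁻ ℓ, g ℓ ∂(pmeas μ n) := by
        have := mul_meas_ge_le_lintegral₀ (μ := pmeas μ n) hgmeas.aemeasurable 1
        simpa using this
    _ = ∏ j, ∫⁻ y, ENNReal.ofReal (Real.exp (c j * y)) ∂μ := by
        exact lintegral_pi_prod μ n (fun j y => ENNReal.ofReal (Real.exp (c j * y)))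
          (fun j => ENNReal.measurable_ofReal.comp
            (Real.measurable_exp.comp (measurable_id.const_mul (c j))))
    _ = ∏ j, ENNReal.ofReal (mgfR μ (c j)) := by
        apply Finset.prod_congr rfl
        intro j _
        apply lint_exp
        by_cases hB : j ∈ B
        · rw [hcB j hB]; exact hs
        · by_cases hA : j ∈ A
          · rw [hcA j hA]; exact hs'
          · have h0 : c j = 0 := by simp [hc, hA, hB]
            rw [h0]
            simpa using (integrable_const (1:ℝ) : Integrable (fun _ : ℝ => (1:ℝ)) μ)
    _ ≤ ENNReal.ofReal ((mgfR μ s) ^ B.card * (mgfR μ (-s)) ^ A.card) := by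
        rw [← ENNReal.ofReal_prod_of_nonneg fun j _ => mgfR_nonneg μ (c j)]
        apply le_of_eq
        congr 1
        have p1 : ∏ j ∈ A, mgfR μ (c j) = mgfR μ (-s) ^ A.card := by
          rw [← Finset.prod_const]
          exact Finset.prod_congr rfl fun j hj => by rw [hcA j hj]
        have p2 : ∏ j ∈ B, mgfR μ (c j) = mgfR μ s ^ B.card := by
          rw [← Finset.prod_const]
          exact Finset.prod_congr rfl fun j hj => by rw [hcB j hj]
        have p3 : ∏ j ∈ (A ∪ B)ᶜ, mgfR μ (c j) = 1 :=
          Finset.prod_eq_one fun j hj => by rw [hcO j hj, mgfR_zero]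
        rw [← Finset.prod_mul_prod_compl (A ∪ B) (fun j => mgfR μ (c j)),
          Finset.prod_union hd, p1, p2, p3]
        ring

open scoped Topology

open scoped Topology in
lemma tendsto_slope_exp_pos (x : ℝ) :
    Tendsto (fun s : ℝ => (Real.exp (s * x) - 1) / s) (𝓝[>] (0:ℝ)) (𝓝 x) := by
  have h : HasDerivAt (fun s : ℝ => Real.exp (s * x)) x 0 := by
    have h1 : HasDerivAt (fun s : ℝ => s * x) x 0 := by
      simpa using (hasDerivAt_id (0:ℝ)).mul_const x
    simpa using h1.exp
  have h2 := (hasDerivAt_iff_tendsto_slope.mp h).mono_left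
    (nhdsWithin_mono 0 (fun y hy => ne_of_gt hy))
  refine h2.congr fun s => ?_
  rw [slope_def_field]
  simp

lemma tendsto_slope_exp_neg (x : ℝ) :
    Tendsto (fun s : ℝ => (1 - Real.exp (-s * x)) / s) (𝓝[>] (0:ℝ)) (𝓝 x) := by
  have h : HasDerivAt (fun s : ℝ => -Real.exp (-s * x)) x 0 := by
    have h1 : HasDerivAt (fun s : ℝ => -s * x) (-x) 0 := by
      simpa using ((hasDerivAt_id (0:ℝ)).neg.mul_const x)
    have h2 := h1.exp
    exact h2.neg.congr_deriv (by simp)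
  have h2 := (hasDerivAt_iff_tendsto_slope.mp h).mono_left
    (nhdsWithin_mono 0 (fun y hy => ne_of_gt hy))
  refine h2.congr fun s => ?_
  rw [slope_def_field]
  simp [neg_mul]
  ring_nf

section Analytic

variable {μ : Measure ℝ} [IsProbabilityMeasure μ] {η : ℝ}

lemma integ_exp (hpos : ∀ᵐ x ∂μ, 0 < x) (hη : 0 < η)
    (hexp : Integrable (fun x => Real.exp (η * x)) μ) {t : ℝ} (ht : t ≤ η) :
    Integrable (fun x => Real.exp (t * x)) μ := by
  apply Integrable.mono' ((integrable_const (1:ℝ)).add hexp)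
    (Real.measurable_exp.comp (measurable_id.const_mul t)).aestronglyMeasurable
  filter_upwards [hpos] with x hx
  simp only [Function.comp_apply, Pi.add_apply, id_eq]
  rw [Real.norm_eq_abs, abs_of_pos (Real.exp_pos _)]
  rcases le_or_gt t 0 with h | h
  · have : t * x ≤ 0 := mul_nonpos_of_nonpos_of_nonneg h hx.le
    have := Real.exp_le_one_iff.mpr this
    have h2 : (0:ℝ) < Real.exp (η * x) := Real.exp_pos _
    linarith
  · have : t * x ≤ η * x := by nlinarith
    have := Real.exp_le_exp.mpr this
    have h2 : (0:ℝ) ≤ Real.exp (η * x) := (Real.exp_pos _).le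
    linarith

lemma integ_id (hpos : ∀ᵐ x ∂μ, 0 < x) (hη : 0 < η)
    (hexp : Integrable (fun x => Real.exp (η * x)) μ) :
    Integrable (fun x : ℝ => x) μ := by
  apply Integrable.mono' (hexp.const_mul (1/η)) measurable_id.aestronglyMeasurable
  filter_upwards [hpos] with x hx
  simp only [id_eq]
  rw [Real.norm_eq_abs, abs_of_pos hx]
  have h1 : η * x ≤ Real.exp (η * x) := (Real.add_one_le_exp _).trans' (by linarith)
  rw [div_mul_eq_mul_div, one_mul, le_div_iff₀ hη]
  nlinarith

lemma mean_pos (hpos : ∀ᵐ x ∂μ, 0 < x) (hη : 0 < η)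
    (hexp : Integrable (fun x => Real.exp (η * x)) μ) :
    0 < ∫ x, x ∂μ := by
  rcases lt_or_ge 0 (∫ x, x ∂μ) with h | h
  · exact h
  · exfalso
    have hnn : 0 ≤ᵐ[μ] fun x : ℝ => x := by filter_upwards [hpos] with x hx using hx.le
    have h0 : ∫ x, x ∂μ = 0 :=
      le_antisymm h (integral_nonneg_of_ae hnn)
    have := (integral_eq_zero_iff_of_nonneg_ae hnn (integ_id hpos hη hexp)).mp h0
    have hbad : ∀ᵐ x ∂μ, False := by
      filter_upwards [hpos, this] with x hx hx0
      rw [Pi.zero_apply] at hx0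
      exact absurd hx0 (ne_of_gt (by simpa using hx))
    have hμ0 : μ = 0 := by simpa using hbad
    have h1 : (1:ℝ≥0∞) = 0 := by
      rw [← measure_univ (μ := μ), hμ0]; simp
    exact one_ne_zero h1

/-- Choice of the Chernoff parameter. -/
lemma exists_s (hpos : ∀ᵐ x ∂μ, 0 < x) (hη : 0 < η)
    (hexp : Integrable (fun x => Real.exp (η * x)) μ) {ε : ℝ} (hε : 0 < ε) :
    ∃ s : ℝ, 0 < s ∧ s ≤ η ∧
      mgfR μ s - 1 ≤ s * (∫ x, x ∂μ) * (1 + ε/4) ∧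
      s * (∫ x, x ∂μ) * (1 - ε/4) ≤ 1 - mgfR μ (-s) := by
  have hm0 : 0 < ∫ x, x ∂μ := mean_pos hpos hη hexp
  -- dominated convergence for the right difference quotient of the mgf at 0
  have hconv1 : Tendsto (fun s => ∫ x, (Real.exp (s * x) - 1) / s ∂μ) (𝓝[>] (0:ℝ)) (𝓝 (∫ x, x ∂μ)) := by
    refine tendsto_integral_filter_of_dominated_convergence
      (F := fun (s : ℝ) (x : ℝ) => (Real.exp (s * x) - 1) / s) (f := fun x : ℝ => x)
      (fun x => (2/η) * Real.exp (η * x) + (2/η) * Real.exp (η * x)) ?_ ?_ ?_ ?_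
    · apply Eventually.of_forall
      intro s
      exact (((Real.measurable_exp.comp (measurable_id.const_mul s)).sub
        measurable_const).div_const s).aestronglyMeasurable
    · filter_upwards [Ioc_mem_nhdsGT (by positivity : (0:ℝ) < η/2)] with s hs
      filter_upwards [hpos] with x hx
      obtain ⟨hs0, hs2⟩ := hs
      have hx2 : 0 ≤ s * x := by positivity
      have hexp1 : (1:ℝ) ≤ Real.exp (s * x) := Real.one_le_exp hx2
      rw [Real.norm_eq_abs, abs_of_nonneg (div_nonneg (by linarith) hs0.le)]
      -- (e^{sx} - 1)/s ≤ x e^{sx}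
      have key : Real.exp (s * x) - 1 ≤ s * x * Real.exp (s * x) := by
        have h1 : 1 - s * x ≤ Real.exp (-(s * x)) := by
          have := Real.add_one_le_exp (-(s * x)); linarith
        have h2 : Real.exp (-(s * x)) * Real.exp (s * x) = 1 := by
          rw [← Real.exp_add]; simp
        nlinarith [Real.exp_pos (s * x)]
      have hxb : x ≤ (2/η) * Real.exp (η/2 * x) := by
        have := Real.add_one_le_exp (η/2 * x)
        rw [div_mul_eq_mul_div, le_div_iff₀ hη]
        nlinarith
      have hsx : Real.exp (s * x) ≤ Real.exp (η/2 * x) := by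
        apply Real.exp_le_exp.mpr; nlinarith
      have hee : Real.exp (η/2 * x) * Real.exp (η/2 * x) = Real.exp (η * x) := by
        rw [← Real.exp_add]; ring_nf
      have hstep : (Real.exp (s * x) - 1) / s ≤ x * Real.exp (s * x) := by
        rw [div_le_iff₀ hs0]
        nlinarith
      have : x * Real.exp (s * x) ≤ (2/η) * Real.exp (η * x) := by
        calc x * Real.exp (s * x) ≤ ((2/η) * Real.exp (η/2 * x)) * Real.exp (η/2 * x) := by
              apply mul_le_mul hxb hsx (Real.exp_pos _).le (by positivity)
          _ = (2/η) * Real.exp (η * x) := by rw [mul_assoc, hee]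
      nlinarith [Real.exp_pos (η * x), (by positivity : (0:ℝ) ≤ (2/η) * Real.exp (η * x))]
    · exact ((hexp.const_mul (2/η)).add (hexp.const_mul (2/η)))
    · exact Eventually.of_forall fun x => tendsto_slope_exp_pos x
  have hconv2 : Tendsto (fun s => ∫ x, (1 - Real.exp (-s * x)) / s ∂μ) (𝓝[>] (0:ℝ)) (𝓝 (∫ x, x ∂μ)) := by
    refine tendsto_integral_filter_of_dominated_convergence
      (F := fun (s : ℝ) (x : ℝ) => (1 - Real.exp (-s * x)) / s) (f := fun x : ℝ => x)
      (fun x => (2/η) * Real.exp (η * x)) ?_ ?_ ?_ ?_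
    · apply Eventually.of_forall
      intro s
      exact ((measurable_const.sub
        (Real.measurable_exp.comp (measurable_id.const_mul (-s)))).div_const s).aestronglyMeasurable
    · filter_upwards [self_mem_nhdsWithin] with s hs
      filter_upwards [hpos] with x hx
      have hs0 : (0:ℝ) < s := hs
      have h1 : Real.exp (-s * x) ≤ 1 := by
        apply Real.exp_le_one_iff.mpr; nlinarith
      have h2 : 1 - s * x ≤ Real.exp (-s * x) := by
        have := Real.add_one_le_exp (-s * x); linarith
      rw [Real.norm_eq_abs, abs_of_nonneg (div_nonneg (by linarith) hs0.le)]
      have hxb : x ≤ (2/η) * Real.exp (η * x) := by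
        have h3 := Real.add_one_le_exp (η * x)
        rw [div_mul_eq_mul_div, le_div_iff₀ hη]
        nlinarith [Real.exp_pos (η * x)]
      have : (1 - Real.exp (-s * x)) / s ≤ x := by
        rw [div_le_iff₀ hs0]; nlinarith
      linarith
    · exact hexp.const_mul (2/η)
    · exact Eventually.of_forall fun x => tendsto_slope_exp_neg x
  have e1 : ∀ᶠ s in 𝓝[>] (0:ℝ), ∫ x, (Real.exp (s * x) - 1) / s ∂μ < (∫ x, x ∂μ) * (1 + ε/4) :=
    hconv1.eventually_lt_const (by nlinarith [mul_pos hm0 hε])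
  have e2 : ∀ᶠ s in 𝓝[>] (0:ℝ), (∫ x, x ∂μ) * (1 - ε/4) < ∫ x, (1 - Real.exp (-s * x)) / s ∂μ :=
    hconv2.eventually_const_lt (by nlinarith [mul_pos hm0 hε])
  have e3 : ∀ᶠ s in 𝓝[>] (0:ℝ), s ∈ Set.Ioc (0:ℝ) η := Ioc_mem_nhdsGT hη
  obtain ⟨s, h1, h2, h3⟩ := (e1.and (e2.and e3)).exists
  obtain ⟨hs0, hsη⟩ := h3
  have hint : Integrable (fun x => Real.exp (s * x)) μ := integ_exp hpos hη hexp hsη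
  have hint' : Integrable (fun x => Real.exp (-s * x)) μ :=
    integ_exp hpos hη hexp (by linarith)
  refine ⟨s, hs0, hsη, ?_, ?_⟩
  · -- mgfR μ s - 1 ≤ s * m * (1+ε/4)
    have heq : ∫ x, (Real.exp (s * x) - 1) / s ∂μ = (mgfR μ s - 1) / s := by
      rw [integral_div, integral_sub hint (integrable_const 1)]
      simp [mgfR]
    rw [heq] at h1
    rw [div_lt_iff₀ hs0] at h1
    nlinarith
  · have heq : ∫ x, (1 - Real.exp (-s * x)) / s ∂μ = (1 - mgfR μ (-s)) / s := by
      rw [integral_div, integral_sub (integrable_const 1) hint']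
      simp [mgfR]
    rw [heq] at h2
    rw [lt_div_iff₀ hs0] at h2
    nlinarith

end Analytic

/-- The running condition in the definition of `tau`. -/
def Cnd (n : ℕ) (ℓ : Fin n → ℝ) (t : ℕ) : Prop :=
  0 ≤ coord n ℓ (n - 1) + ∑ i : Fin (n - 1),
    (if (i : ℕ) < t then coord n ℓ (i : ℕ) else - coord n ℓ (i : ℕ))

lemma tau_eq (n : ℕ) (ℓ : Fin n → ℝ) : tau n ℓ = sInf {t | Cnd n ℓ t} := by
  simp [tau, tauPerm, Cnd]

lemma coord_eq (n : ℕ) (ℓ : Fin n → ℝ) (j : Fin n) : ℓ j = coord n ℓ (j : ℕ) := by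
  simp [coord]

lemma coord_pos {n : ℕ} {ℓ : Fin n → ℝ} (hpos : ∀ j, 0 < ℓ j) {i : ℕ} (hi : i < n) :
    0 < coord n ℓ i := by
  rw [coord, dif_pos hi]; exact hpos _

/-- The sets of indices in the two blocks at time `t`. -/
def Aset (n t : ℕ) : Finset (Fin n) :=
  Finset.univ.filter (fun j => (j : ℕ) < t ∨ (j : ℕ) = n - 1)

def Bset (n t : ℕ) : Finset (Fin n) :=
  Finset.univ.filter (fun j => t ≤ (j : ℕ) ∧ (j : ℕ) < n - 1)

lemma AB_disjoint (n t : ℕ) : Disjoint (Aset n t) (Bset n t) := by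
  rw [Finset.disjoint_left]
  intro j hj hj'
  simp only [Aset, Bset, Finset.mem_filter] at hj hj'
  omega

lemma card_filter_fin (n : ℕ) (p : ℕ → Prop) [DecidablePred p] :
    (Finset.univ.filter (fun j : Fin n => p (j : ℕ))).card =
      ((Finset.range n).filter p).card := by
  rw [Finset.card_filter, Finset.card_filter]
  exact Fin.sum_univ_eq_sum_range (fun i => if p i then 1 else 0) n

lemma Aset_card {n t : ℕ} (hn : 1 ≤ n) (ht : t ≤ n - 1) : (Aset n t).card = t + 1 := by
  rw [Aset, Finset.card_filter,
    Fin.sum_univ_eq_sum_range (fun i => if i < t ∨ i = n - 1 then 1 else 0) n,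
    ← Finset.card_filter]
  have : (Finset.range n).filter (fun i => i < t ∨ i = n - 1)
      = insert (n-1) (Finset.range t) := by
    ext a
    simp only [Finset.mem_filter, Finset.mem_range, Finset.mem_insert]
    omega
  rw [this, Finset.card_insert_of_notMem (by simp [Finset.mem_range]; omega),
    Finset.card_range]

lemma Bset_card {n t : ℕ} (hn : 1 ≤ n) (ht : t ≤ n - 1) : (Bset n t).card = n - 1 - t := by
  rw [Bset, Finset.card_filter,
    Fin.sum_univ_eq_sum_range (fun i => if t ≤ i ∧ i < n - 1 then 1 else 0) n,
    ← Finset.card_filter]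
  have : (Finset.range n).filter (fun i => t ≤ i ∧ i < n - 1) = Finset.Ico t (n-1) := by
    ext a
    simp only [Finset.mem_filter, Finset.mem_range, Finset.mem_Ico]
    omega
  rw [this, Nat.card_Ico]

lemma tau_sum_repr {n t : ℕ} (hn : 1 ≤ n) (ht : t ≤ n - 1) (ℓ : Fin n → ℝ) :
    coord n ℓ (n - 1) + ∑ i : Fin (n - 1),
        (if (i : ℕ) < t then coord n ℓ (i : ℕ) else - coord n ℓ (i : ℕ))
      = ∑ j ∈ Aset n t, ℓ j - ∑ j ∈ Bset n t, ℓ j := by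
  obtain ⟨m, rfl⟩ : ∃ m, n = m + 1 := ⟨n - 1, by omega⟩
  simp only [Nat.add_sub_cancel] at ht ⊢
  have hA : ∑ j ∈ Aset (m+1) t, ℓ j
      = ∑ i ∈ Finset.range (m+1), (if i < t ∨ i = m then coord (m+1) ℓ i else 0) := by
    rw [Aset, Finset.sum_filter]
    rw [← Fin.sum_univ_eq_sum_range (fun i => if i < t ∨ i = m then coord (m+1) ℓ i else 0) (m+1)]
    exact Finset.sum_congr rfl fun j _ => by rw [← coord_eq]; simp
  have hB : ∑ j ∈ Bset (m+1) t, ℓ j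
      = ∑ i ∈ Finset.range (m+1), (if t ≤ i ∧ i < m then coord (m+1) ℓ i else 0) := by
    rw [Bset, Finset.sum_filter]
    rw [← Fin.sum_univ_eq_sum_range (fun i => if t ≤ i ∧ i < m then coord (m+1) ℓ i else 0) (m+1)]
    exact Finset.sum_congr rfl fun j _ => by rw [← coord_eq]; simp
  have hL : ∑ i : Fin (m + 1 - 1), (if (i : ℕ) < t then coord (m+1) ℓ (i:ℕ) else - coord (m+1) ℓ (i:ℕ))
      = ∑ i ∈ Finset.range m, (if i < t then coord (m+1) ℓ i else - coord (m+1) ℓ i) :=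
    Fin.sum_univ_eq_sum_range (fun i => if i < t then coord (m+1) ℓ i else - coord (m+1) ℓ i) m
  rw [hA, hB, hL, Finset.sum_range_succ, Finset.sum_range_succ]
  have h1 : (if m < t ∨ m = m then coord (m+1) ℓ m else 0) = coord (m+1) ℓ m := by simp
  have h2 : (if t ≤ m ∧ m < m then coord (m+1) ℓ m else 0) = 0 := by simp
  rw [h1, h2]
  have h3 : ∀ i ∈ Finset.range m,
      ((if i < t ∨ i = m then coord (m+1) ℓ i else 0) - (if t ≤ i ∧ i < m then coord (m+1) ℓ i else 0))
        = (if i < t then coord (m+1) ℓ i else - coord (m+1) ℓ i) := by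
    intro i hi
    rw [Finset.mem_range] at hi
    split_ifs with p q r
    any_goals omega
    all_goals ring
  have h4 : (∑ x ∈ Finset.range m, if x < t ∨ x = m then coord (m+1) ℓ x else 0)
      - (∑ x ∈ Finset.range m, if t ≤ x ∧ x < m then coord (m+1) ℓ x else 0)
      = ∑ i ∈ Finset.range m, (if i < t then coord (m+1) ℓ i else - coord (m+1) ℓ i) := by
    rw [← Finset.sum_sub_distrib]
    exact Finset.sum_congr rfl h3
  linarith [h4]

lemma Cnd_mono {n : ℕ} {ℓ : Fin n → ℝ} (hpos : ∀ j, 0 < ℓ j) {t t' : ℕ} (htt : t ≤ t') :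
    Cnd n ℓ t → Cnd n ℓ t' := by
  intro h
  refine le_trans h (add_le_add (le_refl _) (Finset.sum_le_sum fun i _ => ?_))
  have hc : 0 < coord n ℓ (i : ℕ) := coord_pos hpos (by omega)
  split_ifs with p q
  · exact le_rfl
  · omega
  · linarith
  · exact le_rfl

lemma Cnd_top {n : ℕ} (hn : 1 ≤ n) {ℓ : Fin n → ℝ} (hpos : ∀ j, 0 < ℓ j) :
    Cnd n ℓ (n - 1) := by
  have h1 : 0 < coord n ℓ (n - 1) := coord_pos hpos (by omega)
  have h2 : 0 ≤ ∑ i : Fin (n - 1),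
      (if (i : ℕ) < n - 1 then coord n ℓ (i:ℕ) else - coord n ℓ (i:ℕ)) := by
    apply Finset.sum_nonneg
    intro i _
    rw [if_pos i.isLt]
    exact (coord_pos hpos (by omega)).le
  unfold Cnd
  linarith

lemma tau_le {n : ℕ} (hn : 1 ≤ n) {ℓ : Fin n → ℝ} (hpos : ∀ j, 0 < ℓ j) :
    tau n ℓ ≤ n - 1 := by
  rw [tau_eq]
  exact Nat.sInf_le (Cnd_top hn hpos)

lemma tau_mem {n : ℕ} (hn : 1 ≤ n) {ℓ : Fin n → ℝ} (hpos : ∀ j, 0 < ℓ j) :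
    Cnd n ℓ (tau n ℓ) := by
  rw [tau_eq]
  have hne : {t | Cnd n ℓ t}.Nonempty := ⟨n - 1, Cnd_top hn hpos⟩
  exact Nat.sInf_mem hne

lemma tau_not {n : ℕ} {ℓ : Fin n → ℝ} {t : ℕ} (h : t < tau n ℓ) : ¬ Cnd n ℓ t := by
  rw [tau_eq] at h
  exact Nat.notMem_of_lt_sInf h

lemma maxIdx_lt (n : ℕ) (hn : 1 ≤ n) (ℓ : Fin n → ℝ) : maxIdx n ℓ < n := by
  have hne : {i : ℕ | ∃ h : i < n, ∀ j : Fin n, ℓ j ≤ ℓ ⟨i, h⟩}.Nonempty := by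
    have : Nonempty (Fin n) := ⟨⟨0, hn⟩⟩
    obtain ⟨x, hx⟩ := Finite.exists_max ℓ
    exact ⟨(x : ℕ), x.isLt, fun j => by simpa [Fin.eta] using hx j⟩
  obtain ⟨h, -⟩ := Nat.sInf_mem hne
  exact h

lemma tilde_eq_comp {n : ℕ} (hn : 1 ≤ n) (ℓ : Fin n → ℝ) :
    tildeVec n ℓ = ℓ ∘ (Equiv.swap (⟨maxIdx n ℓ, maxIdx_lt n hn ℓ⟩ : Fin n)
      ⟨n - 1, by omega⟩) := by
  set a : Fin n := ⟨maxIdx n ℓ, maxIdx_lt n hn ℓ⟩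
  set b : Fin n := ⟨n - 1, by omega⟩
  funext j
  simp only [tildeVec, Function.comp_apply]
  by_cases h1 : (j : ℕ) = maxIdx n ℓ
  · have hj : j = a := Fin.ext h1
    rw [if_pos h1, hj, Equiv.swap_apply_left]
    rw [coord, dif_pos (by omega : n - 1 < n)]
  · rw [if_neg h1]
    by_cases h2 : (j : ℕ) = n - 1
    · have hj : j = b := Fin.ext h2
      rw [if_pos h2, hj, Equiv.swap_apply_right]
      rw [coord, dif_pos (maxIdx_lt n hn ℓ)]
    · rw [if_neg h2, Equiv.swap_apply_of_ne_of_ne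
        (fun h => h1 (by rw [h])) (fun h => h2 (by rw [h]))]

lemma key_bound (μ : Measure ℝ) [IsProbabilityMeasure μ] {s M ε' : ℝ}
    (hs0 : 0 < s)
    (hint : Integrable (fun x => Real.exp (s * x)) μ)
    (hint' : Integrable (fun x => Real.exp (-s * x)) μ)
    (hM : 0 < M) (hε'0 : 0 < ε') (hε'2 : ε' ≤ 1/2)
    (hu : mgfR μ s - 1 ≤ s * M * (1 + ε'/4))
    (hv : s * M * (1 - ε'/4) ≤ 1 - mgfR μ (-s))
    {n : ℕ} (hn : 8 ≤ 3 * ε' * n)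
    (A B : Finset (Fin n)) (hd : Disjoint A B)
    (hab : (B.card : ℝ) + (2 * ε' * n - 2) ≤ A.card) :
    pmeas μ n {ℓ | ∑ j ∈ A, ℓ j ≤ ∑ j ∈ B, ℓ j} ≤
      ENNReal.ofReal (Real.exp (-(s * M * ε'/2) * n)) := by
  refine (chernoff_bound μ hs0.le hint hint' n A B hd).trans (ENNReal.ofReal_le_ofReal ?_)
  have hb0 : (0:ℝ) ≤ B.card := Nat.cast_nonneg _
  have ha0 : (0:ℝ) ≤ A.card := Nat.cast_nonneg _
  have hbn : (B.card:ℝ) ≤ n := by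
    have := Finset.card_le_univ B
    rw [Fintype.card_fin] at this
    exact_mod_cast this
  have hn0 : (0:ℝ) ≤ n := Nat.cast_nonneg _
  have hU : mgfR μ s ≤ Real.exp (s * M * (1 + ε'/4)) := by
    have := Real.add_one_le_exp (s * M * (1 + ε'/4)); linarith
  have hV : mgfR μ (-s) ≤ Real.exp (-(s * M * (1 - ε'/4))) := by
    have := Real.add_one_le_exp (-(s * M * (1 - ε'/4))); linarith
  have hq : (0:ℝ) < s * M := mul_pos hs0 hM
  calc mgfR μ s ^ B.card * mgfR μ (-s) ^ A.card
      ≤ Real.exp (s*M*(1+ε'/4)) ^ B.card * Real.exp (-(s*M*(1-ε'/4))) ^ A.card := by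
        apply mul_le_mul (pow_le_pow_left₀ (mgfR_nonneg μ s) hU _)
          (pow_le_pow_left₀ (mgfR_nonneg μ (-s)) hV _)
          (pow_nonneg (mgfR_nonneg μ (-s)) _) (pow_nonneg (Real.exp_pos _).le _)
    _ = Real.exp ((B.card:ℝ) * (s*M*(1+ε'/4)) + (A.card:ℝ) * (-(s*M*(1-ε'/4)))) := by
        rw [← Real.exp_nat_mul, ← Real.exp_nat_mul, ← Real.exp_add]
    _ ≤ Real.exp (-(s * M * ε'/2) * n) := by
        apply Real.exp_le_exp.mpr
        nlinarith [mul_nonneg (by linarith : (0:ℝ) ≤ (A.card:ℝ) - (B.card:ℝ) - (2*ε'*n - 2))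
            (by nlinarith : (0:ℝ) ≤ s*M*(1-ε'/4)),
          mul_nonneg (by linarith : (0:ℝ) ≤ (n:ℝ) - B.card)
            (by nlinarith : (0:ℝ) ≤ s*M*(ε'/2)),
          mul_nonneg (by linarith : (0:ℝ) ≤ 3*ε'*n - 8) hq.le,
          mul_nonneg (mul_nonneg (by linarith : (0:ℝ) ≤ 1/2 - ε')
            (mul_nonneg hε'0.le hn0)) hq.le]

lemma incl_up {n : ℕ} (hn : 2 ≤ n) {ε' : ℝ} (hε'0 : 0 < ε') (hε'2 : ε' ≤ 1/2)
    {v : Fin n → ℝ} (hpos : ∀ j, 0 < v j)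
    (h : ε' ≤ (tau n v : ℝ) / n - 1/2) :
    ∑ j ∈ Aset n (⌈(1/2+ε')*(n:ℝ)⌉₊ - 1), v j ≤ ∑ j ∈ Bset n (⌈(1/2+ε')*(n:ℝ)⌉₊ - 1), v j := by
  have hn0 : (0:ℝ) < n := by
    have : (2:ℝ) ≤ n := by exact_mod_cast hn
    linarith
  have hτ : (1/2+ε')*(n:ℝ) ≤ tau n v := by
    have h' : (1/2 + ε') ≤ (tau n v : ℝ)/n := by linarith
    rw [le_div_iff₀ hn0] at h'
    linarith
  set t0 := ⌈(1/2+ε')*(n:ℝ)⌉₊ with ht0def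
  have ht0τ : t0 ≤ tau n v := Nat.ceil_le.mpr hτ
  have ht01 : 1 ≤ t0 := Nat.ceil_pos.mpr (by positivity)
  have ht0n : t0 ≤ n := Nat.ceil_le.mpr (by nlinarith)
  have hnot : ¬ Cnd n v (t0 - 1) := tau_not (by omega)
  have hrepr := tau_sum_repr (show 1 ≤ n by omega) (show t0 - 1 ≤ n - 1 by omega) v
  unfold Cnd at hnot
  rw [hrepr] at hnot
  push_neg at hnot
  linarith

lemma incl_low {n : ℕ} (hn : 2 ≤ n) {ε' : ℝ} (hε'0 : 0 < ε') (hε'2 : ε' ≤ 1/2)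
    {v : Fin n → ℝ} (hpos : ∀ j, 0 < v j)
    (h : ε' ≤ 1/2 - (tau n v : ℝ) / n) :
    ∑ j ∈ Bset n ⌊(1/2-ε')*(n:ℝ)⌋₊, v j ≤ ∑ j ∈ Aset n ⌊(1/2-ε')*(n:ℝ)⌋₊, v j := by
  have hn0 : (0:ℝ) < n := by
    have : (2:ℝ) ≤ n := by exact_mod_cast hn
    linarith
  have hnn : (2:ℝ) ≤ n := by exact_mod_cast hn
  have hτ : (tau n v : ℝ) ≤ (1/2-ε')*(n:ℝ) := by
    have h' : (tau n v : ℝ)/n ≤ (1/2 - ε') := by linarith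
    rw [div_le_iff₀ hn0] at h'
    linarith
  set t1 := ⌊(1/2-ε')*(n:ℝ)⌋₊ with ht1def
  have hτt1 : tau n v ≤ t1 := Nat.le_floor hτ
  have ht1r : (t1:ℝ) ≤ (1/2-ε')*(n:ℝ) := Nat.floor_le (by nlinarith)
  have ht1n : t1 ≤ n - 1 := by
    have hcast : ((n - 1 : ℕ):ℝ) = (n:ℝ) - 1 := by
      rw [Nat.cast_sub (by omega)]; simp
    have : (t1:ℝ) ≤ ((n-1:ℕ):ℝ) := by rw [hcast]; nlinarith
    exact_mod_cast this
  have hC : Cnd n v t1 := Cnd_mono hpos hτt1 (tau_mem (by omega) hpos)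
  have hrepr := tau_sum_repr (show 1 ≤ n by omega) ht1n v
  unfold Cnd at hC
  rw [hrepr] at hC
  linarith

lemma pos_null (μ : Measure ℝ) [IsProbabilityMeasure μ]
    (hsupp : μ (Set.Ioi (0 : ℝ))ᶜ = 0) (n : ℕ) :
    pmeas μ n {ℓ | ¬ ∀ j, 0 < ℓ j} = 0 := by
  have hsub : {ℓ : Fin n → ℝ | ¬ ∀ j, 0 < ℓ j} ⊆
      ⋃ j, (Function.eval j) ⁻¹' (Set.Ioi (0:ℝ))ᶜ := by
    intro ℓ hℓ
    rw [Set.mem_setOf_eq] at hℓ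
    push_neg at hℓ
    obtain ⟨j, hj⟩ := hℓ
    exact Set.mem_iUnion.mpr ⟨j, by simpa using hj⟩
  apply measure_mono_null hsub
  apply measure_iUnion_null
  intro j
  exact MeasureTheory.Measure.pi_eval_preimage_null (μ := fun _ : Fin n => μ) (i := j) hsupp


set_option maxHeartbeats 2000000 in
/-- Large deviations estimate for the stopping time: for every `ε > 0`
there exist `c > 0` and `N` such that `μ_n(|n⁻¹τ(ℓ) - 1/2| ≥ ε) ≤ e^{-cn}` for `n ≥ N`;
the same holds for `τ̃`. -/
theorem stmt19 (μ : MeasureTheory.Measure ℝ) [IsProbabilityMeasure μ] [NullSingletonClass μ]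
    (hsupp : μ (Set.Ioi (0 : ℝ))ᶜ = 0)
    (hexp : ∃ η > 0, Integrable (fun x => Real.exp (η * x)) μ)
    (ε : ℝ) (hε : 0 < ε) :
    (∃ c > (0 : ℝ), ∃ N : ℕ, ∀ n ≥ N,
      pmeas μ n {ℓ | ε ≤ |(tau n ℓ : ℝ) / n - 1 / 2|} ≤
        ENNReal.ofReal (Real.exp (-c * n))) ∧
    (∃ c > (0 : ℝ), ∃ N : ℕ, ∀ n ≥ N,
      pmeas μ n {ℓ | ε ≤ |(tauTilde n ℓ : ℝ) / n - 1 / 2|} ≤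
        ENNReal.ofReal (Real.exp (-c * n))) := by
  classical
  obtain ⟨η, hη, hexpη⟩ := hexp
  have hpos : ∀ᵐ x ∂μ, 0 < x := by
    rw [ae_iff]
    rw [show {x : ℝ | ¬ 0 < x} = (Set.Ioi (0:ℝ))ᶜ by ext x; simp]
    exact hsupp
  set ε' := min ε (1/2) with hε'def
  have hε'0 : 0 < ε' := lt_min hε (by norm_num)
  have hε'2 : ε' ≤ 1/2 := min_le_right _ _
  have hε'ε : ε' ≤ ε := min_le_left _ _
  have hM : 0 < ∫ x, x ∂μ := mean_pos hpos hη hexpη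
  obtain ⟨s, hs0, hsη, hu, hv⟩ := exists_s hpos hη hexpη hε'0
  set M := ∫ x, x ∂μ with hMdef
  have hint : Integrable (fun x => Real.exp (s*x)) μ := integ_exp hpos hη hexpη hsη
  have hint' : Integrable (fun x => Real.exp (-s*x)) μ := integ_exp hpos hη hexpη (by linarith)
  set c0 := s*M*ε'/2 with hc0def
  have hc00 : 0 < c0 := by rw [hc0def]; positivity
  set N : ℕ := max 2 ⌈8/(3*ε') + 32/c0^2⌉₊ with hNdef
  have npack : ∀ n : ℕ, N ≤ n → 2 ≤ n ∧ 8 ≤ 3*ε'*(n:ℝ) ∧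
      (n:ℝ≥0∞) * (ENNReal.ofReal (Real.exp (-c0*n)) + ENNReal.ofReal (Real.exp (-c0*n)))
        ≤ ENNReal.ofReal (Real.exp (-(c0/2)*n)) := by
    intro n hn
    have hn2 : 2 ≤ n := le_trans (le_max_left _ _) hn
    have hna : ⌈8/(3*ε') + 32/c0^2⌉₊ ≤ n := le_trans (le_max_right _ _) hn
    have hnR : 8/(3*ε') + 32/c0^2 ≤ (n:ℝ) := Nat.ceil_le.mp hna
    have h1 : (0:ℝ) ≤ 8/(3*ε') := by positivity
    have h2 : (0:ℝ) ≤ 32/c0^2 := by positivity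
    have hnn : (0:ℝ) < n := by
      have : (2:ℝ) ≤ n := by exact_mod_cast hn2
      linarith
    have hn8 : 8 ≤ 3*ε'*(n:ℝ) := by
      have h3 : 8/(3*ε') ≤ (n:ℝ) := by linarith
      rw [div_le_iff₀ (by positivity)] at h3
      linarith
    have hn32 : 32 ≤ c0^2*(n:ℝ) := by
      have h3 : 32/c0^2 ≤ (n:ℝ) := by linarith
      rw [div_le_iff₀ (by positivity)] at h3
      linarith
    refine ⟨hn2, hn8, ?_⟩
    have e1 : 1 + c0*n/4 ≤ Real.exp (c0*n/4) := by
      linarith [Real.add_one_le_exp (c0*n/4)]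
    have ht0 : (0:ℝ) ≤ c0*n/4 := by positivity
    have e2 : Real.exp (c0*n/4) * Real.exp (c0*n/4) = Real.exp (c0*n/2) := by
      rw [← Real.exp_add]; ring_nf
    have hq2 : 2*(n:ℝ) ≤ (1 + c0*n/4)*(1 + c0*n/4) := by
      nlinarith [mul_nonneg (by linarith : (0:ℝ) ≤ c0^2*n - 32) hnn.le]
    have e3 : 2*(n:ℝ) ≤ Real.exp (c0*n/2) := by
      nlinarith [Real.exp_pos (c0*n/4)]
    have e4 : Real.exp (c0*n/2) * Real.exp (-c0*n) = Real.exp (-(c0/2)*n) := by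
      rw [← Real.exp_add]; ring_nf
    have hreal : (n:ℝ)*(Real.exp (-c0*(n:ℝ)) + Real.exp (-c0*(n:ℝ))) ≤ Real.exp (-(c0/2)*(n:ℝ)) := by
      have h5 := mul_le_mul_of_nonneg_right e3 (Real.exp_pos (-c0*(n:ℝ))).le
      rw [e4] at h5
      linarith [h5]
    calc (n:ℝ≥0∞) * (ENNReal.ofReal (Real.exp (-c0*n)) + ENNReal.ofReal (Real.exp (-c0*n)))
        = ENNReal.ofReal ((n:ℝ)*(Real.exp (-c0*n) + Real.exp (-c0*n))) := by
          rw [← ENNReal.ofReal_add (Real.exp_pos _).le (Real.exp_pos _).le,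
            ← ENNReal.ofReal_natCast n, ← ENNReal.ofReal_mul (Nat.cast_nonneg n)]
      _ ≤ ENNReal.ofReal (Real.exp (-(c0/2)*n)) := ENNReal.ofReal_le_ofReal hreal
  have hkeyAB : ∀ n : ℕ, N ≤ n → ∀ (A B : Finset (Fin n)), Disjoint A B →
      ((B.card : ℝ) + (2*ε'*n - 2) ≤ A.card) →
      pmeas μ n {ℓ | ∑ j ∈ A, ℓ j ≤ ∑ j ∈ B, ℓ j} ≤ ENNReal.ofReal (Real.exp (-c0*n)) := by
    intro n hn A B hd hab
    obtain ⟨hn2, hn8, -⟩ := npack n hn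
    have h := key_bound μ hs0 hint hint' hM hε'0 hε'2 hu hv hn8 A B hd hab
    rw [hc0def]
    exact h
  -- cardinality estimates
  have hcardsA : ∀ n : ℕ, 2 ≤ n →
      ((Bset n (⌈(1/2+ε')*(n:ℝ)⌉₊ - 1)).card : ℝ) + (2*ε'*n - 2) ≤
        ((Aset n (⌈(1/2+ε')*(n:ℝ)⌉₊ - 1)).card : ℝ) := by
    intro n hn2
    have hnn : (0:ℝ) < n := by
      have : (2:ℝ) ≤ n := by exact_mod_cast hn2
      linarith
    set t0 := ⌈(1/2+ε')*(n:ℝ)⌉₊ with ht0def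
    have ht01 : 1 ≤ t0 := Nat.ceil_pos.mpr (by positivity)
    have ht0n : t0 ≤ n := Nat.ceil_le.mpr (by nlinarith)
    have ht0c : (1/2+ε')*(n:ℝ) ≤ t0 := Nat.le_ceil _
    rw [Aset_card (by omega) (by omega), Bset_card (by omega) (by omega)]
    have h1 : n - 1 - (t0 - 1) = n - t0 := by omega
    have h2 : t0 - 1 + 1 = t0 := by omega
    rw [h1, h2, Nat.cast_sub ht0n]
    linarith
  have hcardsB : ∀ n : ℕ, 2 ≤ n →
      ((Aset n ⌊(1/2-ε')*(n:ℝ)⌋₊).card : ℝ) + (2*ε'*n - 2) ≤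
        ((Bset n ⌊(1/2-ε')*(n:ℝ)⌋₊).card : ℝ) := by
    intro n hn2
    have hnn : (2:ℝ) ≤ n := by exact_mod_cast hn2
    set t1 := ⌊(1/2-ε')*(n:ℝ)⌋₊ with ht1def
    have ht1r : (t1:ℝ) ≤ (1/2-ε')*(n:ℝ) := Nat.floor_le (by nlinarith)
    have ht1n : t1 ≤ n - 1 := by
      have hcast : ((n - 1 : ℕ):ℝ) = (n:ℝ) - 1 := by
        rw [Nat.cast_sub (by omega)]; simp
      have : (t1:ℝ) ≤ ((n-1:ℕ):ℝ) := by rw [hcast]; nlinarith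
      exact_mod_cast this
    rw [Aset_card (by omega) ht1n, Bset_card (by omega) ht1n]
    have hcast1 : ((n - 1 - t1 : ℕ):ℝ) = (n:ℝ) - 1 - t1 := by
      rw [Nat.cast_sub ht1n, Nat.cast_sub (by omega)]; simp
    rw [hcast1]
    push_cast
    linarith
  constructor
  · -- the bound for tau
    refine ⟨c0/2, by positivity, N, fun n hn => ?_⟩
    obtain ⟨hn2, hn8, hbig⟩ := npack n hn
    have hsub : {ℓ : Fin n → ℝ | ε ≤ |(tau n ℓ : ℝ) / n - 1 / 2|} ⊆
        ({ℓ : Fin n → ℝ | ∑ j ∈ Aset n (⌈(1/2+ε')*(n:ℝ)⌉₊ - 1), ℓ j ≤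
            ∑ j ∈ Bset n (⌈(1/2+ε')*(n:ℝ)⌉₊ - 1), ℓ j} ∪
          ({ℓ : Fin n → ℝ | ∑ j ∈ Bset n ⌊(1/2-ε')*(n:ℝ)⌋₊, ℓ j ≤
            ∑ j ∈ Aset n ⌊(1/2-ε')*(n:ℝ)⌋₊, ℓ j} ∪
           {ℓ : Fin n → ℝ | ¬ ∀ j, 0 < ℓ j})) := by
      intro ℓ hℓ
      rw [Set.mem_setOf_eq] at hℓ
      simp only [Set.mem_union, Set.mem_setOf_eq]
      by_cases hp : ∀ j, 0 < ℓ j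
      · rcases le_abs.mp (le_trans hε'ε hℓ) with h | h
        · exact Or.inl (incl_up hn2 hε'0 hε'2 hp h)
        · exact Or.inr (Or.inl (incl_low hn2 hε'0 hε'2 hp (by linarith)))
      · exact Or.inr (Or.inr hp)
    calc pmeas μ n {ℓ | ε ≤ |(tau n ℓ : ℝ) / n - 1 / 2|}
        ≤ pmeas μ n _ := measure_mono hsub
      _ ≤ pmeas μ n {ℓ : Fin n → ℝ | ∑ j ∈ Aset n (⌈(1/2+ε')*(n:ℝ)⌉₊ - 1), ℓ j ≤
            ∑ j ∈ Bset n (⌈(1/2+ε')*(n:ℝ)⌉₊ - 1), ℓ j} +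
          (pmeas μ n {ℓ : Fin n → ℝ | ∑ j ∈ Bset n ⌊(1/2-ε')*(n:ℝ)⌋₊, ℓ j ≤
            ∑ j ∈ Aset n ⌊(1/2-ε')*(n:ℝ)⌋₊, ℓ j} +
           pmeas μ n {ℓ : Fin n → ℝ | ¬ ∀ j, 0 < ℓ j}) :=
          le_trans (measure_union_le _ _) (add_le_add (le_refl _) (measure_union_le _ _))
      _ ≤ ENNReal.ofReal (Real.exp (-c0*n)) + (ENNReal.ofReal (Real.exp (-c0*n)) + 0) := by
          refine add_le_add ?_ (add_le_add ?_ (le_of_eq (pos_null μ hsupp n)))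
          · exact hkeyAB n hn _ _ (AB_disjoint _ _) (hcardsA n hn2)
          · exact hkeyAB n hn _ _ (AB_disjoint _ _).symm (hcardsB n hn2)
      _ ≤ (n:ℝ≥0∞) * (ENNReal.ofReal (Real.exp (-c0*n)) + ENNReal.ofReal (Real.exp (-c0*n))) := by
          rw [add_zero]
          exact le_mul_of_one_le_left (by positivity) (by exact_mod_cast Nat.one_le_cast.mpr (by omega))
      _ ≤ ENNReal.ofReal (Real.exp (-(c0/2)*n)) := hbig
  · -- the bound for tauTilde
    refine ⟨c0/2, by positivity, N, fun n hn => ?_⟩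
    obtain ⟨hn2, hn8, hbig⟩ := npack n hn
    have hlast : n - 1 < n := by omega
    set swp : Fin n → Equiv.Perm (Fin n) := fun i => Equiv.swap i ⟨n-1, hlast⟩ with hswp
    have hsub : {ℓ : Fin n → ℝ | ε ≤ |(tauTilde n ℓ : ℝ) / n - 1 / 2|} ⊆
        ((⋃ i : Fin n,
          ({ℓ : Fin n → ℝ | ∑ j ∈ (Aset n (⌈(1/2+ε')*(n:ℝ)⌉₊ - 1)).image (swp i), ℓ j ≤
              ∑ j ∈ (Bset n (⌈(1/2+ε')*(n:ℝ)⌉₊ - 1)).image (swp i), ℓ j} ∪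
           {ℓ : Fin n → ℝ | ∑ j ∈ (Bset n ⌊(1/2-ε')*(n:ℝ)⌋₊).image (swp i), ℓ j ≤
              ∑ j ∈ (Aset n ⌊(1/2-ε')*(n:ℝ)⌋₊).image (swp i), ℓ j})) ∪
         {ℓ : Fin n → ℝ | ¬ ∀ j, 0 < ℓ j}) := by
      intro ℓ hℓ
      rw [Set.mem_setOf_eq] at hℓ
      by_cases hp : ∀ j, 0 < ℓ j
      · left
        set i0 : Fin n := ⟨maxIdx n ℓ, maxIdx_lt n (by omega) ℓ⟩ with hi0
        refine Set.mem_iUnion.mpr ⟨i0, ?_⟩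
        have hveq : tildeVec n ℓ = ℓ ∘ (swp i0) := tilde_eq_comp (by omega) ℓ
        have hvpos : ∀ j, 0 < (ℓ ∘ (swp i0)) j := fun j => hp _
        have hℓ' : ε ≤ |(tau n (ℓ ∘ (swp i0)) : ℝ) / n - 1/2| := by
          rw [← hveq]
          exact hℓ
        simp only [Set.mem_union, Set.mem_setOf_eq]
        rcases le_abs.mp (le_trans hε'ε hℓ') with h | h
        · left
          have hres := incl_up hn2 hε'0 hε'2 hvpos h
          rw [Finset.sum_image (fun x _ y _ hxy => (swp i0).injective hxy),
            Finset.sum_image (fun x _ y _ hxy => (swp i0).injective hxy)]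
          exact hres
        · right
          have hres := incl_low hn2 hε'0 hε'2 hvpos (by linarith)
          rw [Finset.sum_image (fun x _ y _ hxy => (swp i0).injective hxy),
            Finset.sum_image (fun x _ y _ hxy => (swp i0).injective hxy)]
          exact hres
      · right; exact hp
    calc pmeas μ n {ℓ | ε ≤ |(tauTilde n ℓ : ℝ) / n - 1 / 2|}
        ≤ pmeas μ n _ := measure_mono hsub
      _ ≤ pmeas μ n (⋃ i : Fin n,
          ({ℓ : Fin n → ℝ | ∑ j ∈ (Aset n (⌈(1/2+ε')*(n:ℝ)⌉₊ - 1)).image (swp i), ℓ j ≤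
              ∑ j ∈ (Bset n (⌈(1/2+ε')*(n:ℝ)⌉₊ - 1)).image (swp i), ℓ j} ∪
           {ℓ : Fin n → ℝ | ∑ j ∈ (Bset n ⌊(1/2-ε')*(n:ℝ)⌋₊).image (swp i), ℓ j ≤
              ∑ j ∈ (Aset n ⌊(1/2-ε')*(n:ℝ)⌋₊).image (swp i), ℓ j})) +
          pmeas μ n {ℓ : Fin n → ℝ | ¬ ∀ j, 0 < ℓ j} := measure_union_le _ _
      _ ≤ (∑ i : Fin n,
            (ENNReal.ofReal (Real.exp (-c0*n)) + ENNReal.ofReal (Real.exp (-c0*n)))) + 0 := by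
          refine add_le_add ?_ (le_of_eq (pos_null μ hsupp n))
          refine le_trans (measure_iUnion_fintype_le _ _) (Finset.sum_le_sum fun i _ => ?_)
          refine le_trans (measure_union_le _ _) (add_le_add ?_ ?_)
          · refine hkeyAB n hn _ _ ?_ ?_
            · exact (Finset.disjoint_image (swp i).injective).mpr (AB_disjoint _ _)
            · rw [Finset.card_image_of_injective _ (swp i).injective,
                Finset.card_image_of_injective _ (swp i).injective]
              exact hcardsA n hn2
          · refine hkeyAB n hn _ _ ?_ ?_
            · exact (Finset.disjoint_image (swp i).injective).mpr (AB_disjoint _ _).symm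
            · rw [Finset.card_image_of_injective _ (swp i).injective,
                Finset.card_image_of_injective _ (swp i).injective]
              exact hcardsB n hn2
      _ = (n:ℝ≥0∞) * (ENNReal.ofReal (Real.exp (-c0*n)) + ENNReal.ofReal (Real.exp (-c0*n))) := by
          rw [add_zero, Finset.sum_const, Finset.card_univ, Fintype.card_fin, nsmul_eq_mul]
      _ ≤ ENNReal.ofReal (Real.exp (-(c0/2)*n)) := hbig
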